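/- Let l₁, l₂, l₃ > 0 and α₁, α₂, α₃ ∈ ℝ \ {0}. For a triple of positive integers (k₁,k₂,k₃), let φ_{k₁,k₂,k₃}(x₁,x₂,x₃) = (2^{3/2}/√(l₁l₂l₃)) sin(k₁πx₁/l₁) sin(k₂πx₂/l₂) sin(k₃πx₃/l₃). Then for every pair of triples of positive integers (k₁,k₂,k₃) and (h₁,h₂,h₃), ∫_{(0,l₁)×(0,l₂)×(0,l₃)} e^{α₁x₁+α₂x₂+α₃x₃} φ_{k₁,k₂,k₃}(x) φ_{h₁,h₂,h₃}(x) dx ≠ 0. -/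

import Mathlib

open MeasureTheory Real

lemma cosNatPi (n : ℕ) : Real.cos (n * π) = (-1 : ℝ) ^ n := by
  simpa using Real.cos_nat_mul_pi_sub 0 n

lemma sinNatPi (n : ℕ) : Real.sin (n * π) = 0 := by
  simpa using Real.sin_int_mul_pi (n : ℤ)

/-- `∫₀ˡ e^{αx} cos(cx) dx` for `α ≠ 0`. -/
lemma int_exp_cos (α c l : ℝ) (hα : α ≠ 0) :
    ∫ x in (0:ℝ)..l, Real.exp (α * x) * Real.cos (c * x)
      = (Real.exp (α * l) * (α * Real.cos (c * l) + c * Real.sin (c * l)) - α)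
          / (α ^ 2 + c ^ 2) := by
  have hden : α ^ 2 + c ^ 2 ≠ 0 := by positivity
  set F : ℝ → ℝ := fun x =>
    Real.exp (α * x) * (α * Real.cos (c * x) + c * Real.sin (c * x)) / (α ^ 2 + c ^ 2)
    with hF
  have hderiv : ∀ x ∈ Set.uIcc (0:ℝ) l,
      HasDerivAt F (Real.exp (α * x) * Real.cos (c * x)) x := by
    intro x _
    have h1 : HasDerivAt (fun x => Real.exp (α * x)) (Real.exp (α * x) * α) x :=
      by simpa using ((hasDerivAt_id x).const_mul α).exp
    have h2 : HasDerivAt (fun x => α * Real.cos (c * x) + c * Real.sin (c * x))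
        (α * (-Real.sin (c * x) * c) + c * (Real.cos (c * x) * c)) x := by
      have ha : HasDerivAt (fun x => α * Real.cos (c * x)) (α * (-Real.sin (c * x) * c)) x := by
        simpa using ((((hasDerivAt_id x).const_mul c).cos).const_mul α)
      have hb : HasDerivAt (fun x => c * Real.sin (c * x)) (c * (Real.cos (c * x) * c)) x := by
        simpa using ((((hasDerivAt_id x).const_mul c).sin).const_mul c)
      exact ha.add hb
    have := (h1.mul h2).div_const (α ^ 2 + c ^ 2)
    refine this.congr_deriv ?_
    field_simp
    ring
  have hcont : ContinuousOn (fun x => Real.exp (α * x) * Real.cos (c * x))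
      (Set.uIcc (0:ℝ) l) := by fun_prop
  rw [intervalIntegral.integral_eq_sub_of_hasDerivAt hderiv (hcont.intervalIntegrable)]
  simp only [hF]
  simp only [mul_zero, Real.cos_zero, Real.sin_zero, Real.exp_zero]
  ring

lemma int_exp_sin_sin_aux (l α : ℝ) (hl : 0 < l) (hα : α ≠ 0)
    (k h : ℕ) (hk : 0 < k) (hh : 0 < h) (hhk : h ≤ k) :
    (∫ x in (0:ℝ)..l,
        Real.exp (α * x) * (Real.sin (k * π * x / l) * Real.sin (h * π * x / l))) ≠ 0 := by
  have hl0 : l ≠ 0 := hl.ne'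
  set c₁ : ℝ := ((k - h : ℕ) : ℝ) * π / l with hc₁
  set c₂ : ℝ := ((k + h : ℕ) : ℝ) * π / l with hc₂
  have hstep : (∫ x in (0:ℝ)..l,
      Real.exp (α * x) * (Real.sin (k * π * x / l) * Real.sin (h * π * x / l)))
      = (1/2) * ((∫ x in (0:ℝ)..l, Real.exp (α * x) * Real.cos (c₁ * x))
          - ∫ x in (0:ℝ)..l, Real.exp (α * x) * Real.cos (c₂ * x)) := by
    rw [← intervalIntegral.integral_sub
        (((by fun_prop : Continuous fun x => Real.exp (α*x) * Real.cos (c₁*x))).intervalIntegrable 0 l)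
        (((by fun_prop : Continuous fun x => Real.exp (α*x) * Real.cos (c₂*x))).intervalIntegrable 0 l),
      ← intervalIntegral.integral_const_mul]
    apply intervalIntegral.integral_congr
    intro x _
    have hA : c₁ * x = k * π * x / l - h * π * x / l := by
      rw [hc₁]; push_cast [Nat.cast_sub hhk]; field_simp
    have hB : c₂ * x = k * π * x / l + h * π * x / l := by
      rw [hc₂]; push_cast; field_simp
    simp only [hA, hB, Real.cos_sub, Real.cos_add]
    ring
  rw [hstep, int_exp_cos α c₁ l hα, int_exp_cos α c₂ l hα]
  have hc₁l : c₁ * l = ((k - h : ℕ) : ℝ) * π := by rw [hc₁]; field_simp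
  have hc₂l : c₂ * l = ((k + h : ℕ) : ℝ) * π := by rw [hc₂]; field_simp
  rw [hc₁l, hc₂l, cosNatPi, cosNatPi, sinNatPi, sinNatPi]
  have hε : ((-1 : ℝ)) ^ (k - h) = (-1 : ℝ) ^ (k + h) := by
    have hkh : k + h = (k - h) + 2 * h := by omega
    rw [hkh, pow_add, pow_mul]
    norm_num
  set ε : ℝ := (-1 : ℝ) ^ (k + h) with hεdef
  set E : ℝ := Real.exp (α * l) with hE
  have hd₁ : (0:ℝ) < α ^ 2 + c₁ ^ 2 := by positivity
  have hd₂ : (0:ℝ) < α ^ 2 + c₂ ^ 2 := by positivity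
  have hcc : c₁ ^ 2 < c₂ ^ 2 := by
    have h1 : (0:ℝ) ≤ c₁ := by
      rw [hc₁]; positivity
    have h2 : c₁ < c₂ := by
      rw [hc₁, hc₂]
      have : ((k - h : ℕ) : ℝ) < ((k + h : ℕ) : ℝ) := by
        exact_mod_cast (by omega : k - h < k + h)
      have hπl : (0:ℝ) < π / l := by positivity
      calc ((k - h : ℕ) : ℝ) * π / l = ((k - h : ℕ) : ℝ) * (π / l) := by ring
        _ < ((k + h : ℕ) : ℝ) * (π / l) := by
            exact mul_lt_mul_of_pos_right this hπl
        _ = ((k + h : ℕ) : ℝ) * π / l := by ring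
    exact pow_lt_pow_left₀ h2 h1 (by norm_num)
  have hinv : 1 / (α ^ 2 + c₂ ^ 2) < 1 / (α ^ 2 + c₁ ^ 2) :=
    one_div_lt_one_div_of_lt hd₁ (by linarith)
  have hεE : ε * E - 1 ≠ 0 := by
    rcases Nat.even_or_odd (k + h) with he | ho
    · have : ε = 1 := he.neg_one_pow
      rw [this, one_mul]
      have : E ≠ 1 := by
        rw [hE, Ne, Real.exp_eq_one_iff]
        exact mul_ne_zero hα hl0
      intro hcon; exact this (by linarith)
    · have : ε = -1 := ho.neg_one_pow
      rw [this]
      have : 0 < E := Real.exp_pos _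
      nlinarith
  have hval : (1/2) * ((E * (α * ((-1:ℝ) ^ (k - h)) + c₁ * 0) - α) / (α ^ 2 + c₁ ^ 2)
      - (E * (α * ε + c₂ * 0) - α) / (α ^ 2 + c₂ ^ 2))
      = (α / 2) * (ε * E - 1) * (1 / (α ^ 2 + c₁ ^ 2) - 1 / (α ^ 2 + c₂ ^ 2)) := by
    rw [hε]
    field_simp
    ring
  rw [hval]
  exact mul_ne_zero (mul_ne_zero (by positivity) hεE) (by linarith)

lemma int_exp_sin_sin (l α : ℝ) (hl : 0 < l) (hα : α ≠ 0)
    (k h : ℕ) (hk : 0 < k) (hh : 0 < h) :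
    (∫ x in (0:ℝ)..l,
        Real.exp (α * x) * (Real.sin (k * π * x / l) * Real.sin (h * π * x / l))) ≠ 0 := by
  rcases le_total h k with hhk | hhk
  · exact int_exp_sin_sin_aux l α hl hα k h hk hh hhk
  · have := int_exp_sin_sin_aux l α hl hα h k hh hk hhk
    simpa [mul_comm] using this

/-- The normalized Dirichlet eigenfunction of the Laplacian on the box
`(0,l₁)×(0,l₂)×(0,l₃)` with indices `(k₁,k₂,k₃)`. -/
noncomputable def boxEigenfun (l₁ l₂ l₃ : ℝ) (k₁ k₂ k₃ : ℕ) (x : ℝ × ℝ × ℝ) : ℝ :=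
  (2 : ℝ) ^ ((3 : ℝ) / 2) / Real.sqrt (l₁ * l₂ * l₃) *
    Real.sin (k₁ * Real.pi * x.1 / l₁) *
    Real.sin (k₂ * Real.pi * x.2.1 / l₂) *
    Real.sin (k₃ * Real.pi * x.2.2 / l₃)

/-- For nonzero `α₁, α₂, α₃`, the matrix elements of the multiplication operator
by `e^{α₁x₁+α₂x₂+α₃x₃}` between any two Dirichlet eigenfunctions of the box are
nonzero. -/
theorem integral_exp_mul_boxEigenfun_mul_boxEigenfun_ne_zero
    (l₁ l₂ l₃ : ℝ) (hl₁ : 0 < l₁) (hl₂ : 0 < l₂) (hl₃ : 0 < l₃)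
    (α₁ α₂ α₃ : ℝ) (hα₁ : α₁ ≠ 0) (hα₂ : α₂ ≠ 0) (hα₃ : α₃ ≠ 0)
    (k₁ k₂ k₃ h₁ h₂ h₃ : ℕ) (hk₁ : 0 < k₁) (hk₂ : 0 < k₂) (hk₃ : 0 < k₃)
    (hh₁ : 0 < h₁) (hh₂ : 0 < h₂) (hh₃ : 0 < h₃) :
    (∫ x in Set.Ioo (0 : ℝ) l₁ ×ˢ (Set.Ioo (0 : ℝ) l₂ ×ˢ Set.Ioo (0 : ℝ) l₃),
        Real.exp (α₁ * x.1 + α₂ * x.2.1 + α₃ * x.2.2) *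
          (boxEigenfun l₁ l₂ l₃ k₁ k₂ k₃ x * boxEigenfun l₁ l₂ l₃ h₁ h₂ h₃ x)) ≠ 0 := by
  set C : ℝ := ((2 : ℝ) ^ ((3 : ℝ) / 2) / Real.sqrt (l₁ * l₂ * l₃)) ^ 2 with hC
  set f₁ : ℝ → ℝ := fun x =>
    Real.exp (α₁ * x) * (Real.sin (k₁ * π * x / l₁) * Real.sin (h₁ * π * x / l₁)) with hf₁
  set f₂ : ℝ → ℝ := fun x =>
    Real.exp (α₂ * x) * (Real.sin (k₂ * π * x / l₂) * Real.sin (h₂ * π * x / l₂)) with hf₂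
  set f₃ : ℝ → ℝ := fun x =>
    Real.exp (α₃ * x) * (Real.sin (k₃ * π * x / l₃) * Real.sin (h₃ * π * x / l₃)) with hf₃
  have hfun : (fun x : ℝ × ℝ × ℝ =>
      Real.exp (α₁ * x.1 + α₂ * x.2.1 + α₃ * x.2.2) *
        (boxEigenfun l₁ l₂ l₃ k₁ k₂ k₃ x * boxEigenfun l₁ l₂ l₃ h₁ h₂ h₃ x))
      = fun x : ℝ × ℝ × ℝ => (C * f₁ x.1) * (f₂ x.2.1 * f₃ x.2.2) := by
    funext x
    simp only [boxEigenfun, hC, hf₁, hf₂, hf₃, Real.exp_add]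
    ring
  rw [hfun]
  have hmeas : (volume : Measure (ℝ × ℝ × ℝ)).restrict
      (Set.Ioo (0 : ℝ) l₁ ×ˢ (Set.Ioo (0 : ℝ) l₂ ×ˢ Set.Ioo (0 : ℝ) l₃))
      = (volume.restrict (Set.Ioo (0 : ℝ) l₁)).prod
          ((volume.restrict (Set.Ioo (0 : ℝ) l₂)).prod
            (volume.restrict (Set.Ioo (0 : ℝ) l₃))) := by
    rw [Measure.volume_eq_prod, ← Measure.prod_restrict]
    congr 1
    rw [Measure.volume_eq_prod, ← Measure.prod_restrict]
  rw [hmeas,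
    integral_prod_mul (fun a => C * f₁ a) (fun y : ℝ × ℝ => f₂ y.1 * f₃ y.2),
    integral_prod_mul f₂ f₃, integral_const_mul]
  have hIoo : ∀ (g : ℝ → ℝ) (l : ℝ), 0 < l →
      (∫ x in Set.Ioo (0:ℝ) l, g x) = ∫ x in (0:ℝ)..l, g x := by
    intro g l hl
    rw [intervalIntegral.integral_of_le hl.le, integral_Ioc_eq_integral_Ioo]
  rw [hIoo f₁ l₁ hl₁, hIoo f₂ l₂ hl₂, hIoo f₃ l₃ hl₃]
  have hCne : C ≠ 0 := by
    have h2 : (2 : ℝ) ^ ((3 : ℝ) / 2) ≠ 0 := by positivity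
    have hs : Real.sqrt (l₁ * l₂ * l₃) ≠ 0 := by positivity
    positivity
  exact mul_ne_zero (mul_ne_zero hCne (int_exp_sin_sin l₁ α₁ hl₁ hα₁ k₁ h₁ hk₁ hh₁))
    (mul_ne_zero (int_exp_sin_sin l₂ α₂ hl₂ hα₂ k₂ h₂ hk₂ hh₂)
      (int_exp_sin_sin l₃ α₃ hl₃ hα₃ k₃ h₃ hk₃ hh₃))
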